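/- Every finite (AB)^t-free hypergraph (t ≥ 1 half an integer) can be realized by a finite point set S on a horizontal line and a family of x-monotone bi-infinite curves such that each hyperedge equals the set of points of S lying on or above some curve, and any two curves intersect in at most 2t−2 points. -/
import Mathlib
open Finset
noncomputable section
namespace Stmt8


def clampf (n : ℕ) (x : ℝ) : ℝ := max 0 (min ((n:ℝ) - 1) x)

lemma clampf_continuous (n : ℕ) : Continuous (clampf n) :=
  continuous_const.max (continuous_const.min continuous_id)

def interp (n : ℕ) (v : ℕ → ℝ) (x : ℝ) : ℝ :=
  ∑ i ∈ Finset.range n, v i * max 0 (1 - |clampf n x - (i:ℝ)|)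

lemma interp_continuous (n : ℕ) (v : ℕ → ℝ) : Continuous (interp n v) := by
  apply continuous_finset_sum
  intro i _
  exact continuous_const.mul (continuous_const.max
    (continuous_const.sub (((clampf_continuous n).sub continuous_const).abs)))

/-- evaluation when clamped value is `k + t`, `t ∈ [0,1]`, `k+1 < n`. -/
lemma interp_eval (n : ℕ) (v : ℕ → ℝ) (k : ℕ) (hk : k + 1 < n) (t : ℝ)
    (ht0 : 0 ≤ t) (ht1 : t ≤ 1) :
    interp n v ((k : ℝ) + t) = (1 - t) * v k + t * v (k + 1) := by
  have hcl : clampf n ((k:ℝ) + t) = (k:ℝ) + t := by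
    unfold clampf
    have h1 : (0:ℝ) ≤ (k:ℝ) + t := by positivity
    have h2 : (k:ℝ) + t ≤ (n:ℝ) - 1 := by
      have : (k:ℝ) + 2 ≤ (n:ℝ) := by exact_mod_cast hk
      linarith
    rw [min_eq_right h2, max_eq_right h1]
  unfold interp
  rw [hcl]
  have hzero : ∀ i ∈ Finset.range n, i ∉ ({k, k+1} : Finset ℕ) →
      v i * max 0 (1 - |(k:ℝ) + t - (i:ℝ)|) = 0 := by
    intro i _ hi
    simp only [Finset.mem_insert, Finset.mem_singleton, not_or] at hi
    have : (1:ℝ) ≤ |(k:ℝ) + t - (i:ℝ)| := by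
      rcases lt_or_gt_of_ne hi.1 with h | h
      · have h1 : i + 1 ≤ k := h
        have : (i:ℝ) + 1 ≤ (k:ℝ) := by exact_mod_cast h1
        rw [abs_of_nonneg (by linarith)]; linarith
      · have h2 : k + 2 ≤ i := by omega
        have : (k:ℝ) + 2 ≤ (i:ℝ) := by exact_mod_cast h2
        rw [abs_of_nonpos (by linarith)]; linarith
    rw [max_eq_left (by linarith), mul_zero]
  have hsub : ({k, k+1} : Finset ℕ) ⊆ Finset.range n := by
    intro i hi
    simp only [Finset.mem_insert, Finset.mem_singleton] at hi
    rcases hi with rfl | rfl <;> exact Finset.mem_range.mpr (by omega)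
  rw [← Finset.sum_subset hsub (fun i hi hni => hzero i hi hni)]
  rw [Finset.sum_pair (by omega : k ≠ k + 1)]
  have e1 : |(k:ℝ) + t - (k:ℝ)| = t := by rw [abs_of_nonneg (by linarith)]; ring
  have e2 : |(k:ℝ) + t - ((k+1:ℕ):ℝ)| = 1 - t := by
    push_cast; rw [abs_of_nonpos (by linarith)]; ring
  rw [e1, e2, max_eq_right (by linarith), max_eq_right (by linarith)]
  ring

/-- evaluation at integer points -/
lemma interp_eval_int (n : ℕ) (v : ℕ → ℝ) (k : ℕ) (hk : k < n) :
    interp n v (k : ℝ) = v k := by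
  have hcl : clampf n (k:ℝ) = (k:ℝ) := by
    unfold clampf
    have h2 : (k:ℝ) ≤ (n:ℝ) - 1 := by
      have : (k:ℝ) + 1 ≤ (n:ℝ) := by exact_mod_cast hk
      linarith
    rw [min_eq_right h2, max_eq_right (by positivity)]
  unfold interp
  rw [hcl]
  have hzero : ∀ i ∈ Finset.range n, i ∉ ({k} : Finset ℕ) →
      v i * max 0 (1 - |(k:ℝ) - (i:ℝ)|) = 0 := by
    intro i _ hi
    simp only [Finset.mem_singleton] at hi
    have : (1:ℝ) ≤ |(k:ℝ) - (i:ℝ)| := by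
      rcases lt_or_gt_of_ne hi with h | h
      · have h1 : i + 1 ≤ k := h
        have : (i:ℝ) + 1 ≤ (k:ℝ) := by exact_mod_cast h1
        rw [abs_of_nonneg (by linarith)]; linarith
      · have h1 : k + 1 ≤ i := h
        have : (k:ℝ) + 1 ≤ (i:ℝ) := by exact_mod_cast h1
        rw [abs_of_nonpos (by linarith)]; linarith
    rw [max_eq_left (by linarith), mul_zero]
  rw [← Finset.sum_subset (by simp [Finset.singleton_subset_iff, Finset.mem_range, hk])
    (fun i hi hni => hzero i hi hni)]
  simp

lemma clampf_idem (n : ℕ) (x : ℝ) : clampf n (clampf n x) = clampf n x := by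
  unfold clampf
  set c := (n:ℝ) - 1 with hc
  rcases le_total c 0 with h | h
  · have hy : max 0 (min c x) = 0 := max_eq_left (le_trans (min_le_left _ _) h)
    rw [hy, min_eq_left (by linarith : c ≤ (0:ℝ)), max_eq_left h]
  · have h1 : (0:ℝ) ≤ max 0 (min c x) := le_max_left _ _
    have h2 : max 0 (min c x) ≤ c := max_le h (min_le_left _ _)
    rw [min_eq_right h2, max_eq_right h1]

lemma interp_clamp (n : ℕ) (v : ℕ → ℝ) (x : ℝ) :
    interp n v (clampf n x) = interp n v x := by
  unfold interp
  rw [clampf_idem]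

lemma interp_zero_subset (n : ℕ) (hn : 0 < n) (w : ℕ → ℝ) (hw : ∀ k < n, w k ≠ 0) :
    {x : ℝ | interp n w x = 0} ⊆
      (fun k : ℕ => (k:ℝ) + w k / (w k - w (k+1))) ''
        {k : ℕ | k + 1 < n ∧ w k * w (k+1) < 0} := by
  intro x hx
  simp only [Set.mem_setOf_eq] at hx
  set y := clampf n x with hy
  have hy0 : 0 ≤ y := le_max_left _ _
  have hyx : interp n w y = 0 := by rw [hy, interp_clamp]; exact hx
  rcases Nat.lt_or_ge n 2 with hn1 | hn2
  · -- n = 1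
    exfalso
    interval_cases n
    have hy1 : y = 0 := by
      rw [hy]; unfold clampf
      exact max_eq_left (le_trans (min_le_left _ _) (by norm_num))
    have h0 := interp_eval_int 1 w 0 (by omega)
    rw [hy1] at hyx
    apply hw 0 (by omega)
    rw [← h0]
    simpa using hyx
  · -- n ≥ 2
    have hyn : y ≤ (n:ℝ) - 1 := by
      apply max_le
      · have : (2:ℝ) ≤ (n:ℝ) := by exact_mod_cast hn2
        linarith
      · exact min_le_left _ _
    set k : ℕ := min (⌊y⌋.toNat) (n-2) with hkdef
    have hk2 : k + 1 < n := by omega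
    have hflz : (0:ℤ) ≤ ⌊y⌋ := Int.floor_nonneg.mpr hy0
    have hcast : ((⌊y⌋.toNat : ℕ) : ℝ) = ((⌊y⌋ : ℤ) : ℝ) := by
      rw [← Int.cast_natCast, Int.toNat_of_nonneg hflz]
    have hfl : ((⌊y⌋.toNat : ℕ) : ℝ) ≤ y := by
      rw [hcast]; exact Int.floor_le y
    have hky : (k:ℝ) ≤ y := by
      refine le_trans ?_ hfl
      exact_mod_cast Nat.cast_le.mpr (min_le_left _ _)
    set t : ℝ := y - k with htdef
    have ht0 : 0 ≤ t := by simp [htdef]; linarith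
    have ht1 : t ≤ 1 := by
      rcases Nat.lt_or_ge (⌊y⌋.toNat) (n-1) with hc | hc
      · have hkfl : k = ⌊y⌋.toNat := by omega
        have : y < (⌊y⌋ : ℝ) + 1 := Int.lt_floor_add_one y
        rw [htdef, hkfl, hcast]
        linarith
      · -- floor.toNat ≥ n-1 : y ≥ n-1 so y = n-1, k = n-2
        have hkn : k = n - 2 := by omega
        have h3 : ((n:ℝ) - 1) ≤ ((⌊y⌋.toNat:ℕ):ℝ) := by
          have : ((n-1:ℕ):ℝ) ≤ ((⌊y⌋.toNat:ℕ):ℝ) := by exact_mod_cast hc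
          push_cast [Nat.cast_sub (by omega : 1 ≤ n)] at this ⊢
          linarith
        have hyeq : y = (n:ℝ) - 1 := le_antisymm hyn (le_trans h3 hfl)
        rw [htdef, hkn, hyeq]
        have : ((n-2:ℕ):ℝ) = (n:ℝ) - 2 := by
          push_cast [Nat.cast_sub (by omega : 2 ≤ n)]; ring
        rw [this]; linarith
    have hyv : y = (k:ℝ) + t := by rw [htdef]; ring
    have hval : (1 - t) * w k + t * w (k+1) = 0 := by
      rw [← interp_eval n w k hk2 t ht0 ht1, ← hyv]; exact hyx
    have hwk := hw k (by omega)
    have hwk1 := hw (k+1) (by omega)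
    have ht0' : 0 < t := by
      rcases lt_or_eq_of_le ht0 with h | h
      · exact h
      · exfalso; apply hwk; rw [← h] at hval; linarith
    have ht1' : t < 1 := by
      rcases lt_or_eq_of_le ht1 with h | h
      · exact h
      · exfalso; apply hwk1; rw [← h] at hval; nlinarith
    have hprod : w k * w (k+1) < 0 := by
      rcases hwk.lt_or_gt with h | h
      · have h2 : 0 < w (k+1) := by nlinarith
        exact mul_neg_of_neg_of_pos h h2
      · have h2 : w (k+1) < 0 := by nlinarith
        exact mul_neg_of_pos_of_neg h h2
    have hxy : x = y := by
      rw [hy]; unfold clampf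
      have hyg : 0 < y := by rw [hyv]; positivity
      have hyl : y < (n:ℝ) - 1 := by
        rw [hyv]
        have : (k:ℝ) + 2 ≤ (n:ℝ) := by exact_mod_cast hk2
        linarith
      rcases le_or_gt x 0 with h | h
      · exfalso
        have : min ((n:ℝ)-1) x ≤ 0 := le_trans (min_le_right _ _) h
        have : y = 0 := by rw [hy]; unfold clampf; rw [max_eq_left this]
        linarith
      rcases le_or_gt ((n:ℝ)-1) x with h2 | h2
      · exfalso
        have : y = (n:ℝ)-1 := by
          rw [hy]; unfold clampf; rw [min_eq_left h2, max_eq_right (by linarith)]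
        linarith
      · rw [min_eq_right (le_of_lt h2), max_eq_right (le_of_lt h)]
    refine ⟨k, ⟨hk2, hprod⟩, ?_⟩
    have hden : w k - w (k+1) ≠ 0 := by
      intro h
      have : w k = w (k+1) := by linarith
      rw [this] at hprod
      nlinarith
    have htt : t = w k / (w k - w (k+1)) := by
      rw [eq_div_iff hden]; linarith [hval]
    show (k:ℝ) + w k / (w k - w (k+1)) = x
    rw [← htt, ← hyv, hxy]

lemma interp_zero_count (n : ℕ) (hn : 0 < n) (w : ℕ → ℝ) (hw : ∀ k < n, w k ≠ 0) :
    {x : ℝ | interp n w x = 0}.Finite ∧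
    {x : ℝ | interp n w x = 0}.ncard ≤
      ((Finset.range (n-1)).filter (fun k => w k * w (k+1) < 0)).card := by
  have hset : {k : ℕ | k + 1 < n ∧ w k * w (k+1) < 0}
      = ↑((Finset.range (n-1)).filter (fun k => w k * w (k+1) < 0)) := by
    ext k
    simp only [Set.mem_setOf_eq, Finset.coe_filter, Finset.mem_range, Set.mem_setOf_eq]
    constructor
    · rintro ⟨h1, h2⟩; exact ⟨by omega, h2⟩
    · rintro ⟨h1, h2⟩; exact ⟨by omega, h2⟩
  have hsub := interp_zero_subset n hn w hw
  rw [hset] at hsub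
  have hfin : ((fun k : ℕ => (k:ℝ) + w k / (w k - w (k+1))) ''
      ↑((Finset.range (n-1)).filter (fun k => w k * w (k+1) < 0))).Finite :=
    (Finset.finite_toSet _).image _
  refine ⟨hfin.subset hsub, ?_⟩
  calc {x : ℝ | interp n w x = 0}.ncard ≤ _ := Set.ncard_le_ncard hsub hfin
  _ ≤ _ := Set.ncard_image_le (Finset.finite_toSet _)
  _ = _ := Set.ncard_coe_finset _



variable {n : ℕ}

def hfun (n : ℕ) (A : Finset (Fin n)) (k : ℕ) : ℝ :=
  if k ∈ A.image Fin.val then -1 else 1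

def vfun (n : ℕ) (A : Finset (Fin n)) (j : ℕ) : ℝ :=
  hfun n A j + ((4:ℝ)^(n+2))⁻¹ *
    ((∑ k ∈ Finset.range (j+1), hfun n A k * 4^k)
      + (1/100) * ∑ k ∈ Finset.range n, hfun n A k * ((4:ℝ)⁻¹)^k)

def efun (n : ℕ) (A B : Finset (Fin n)) (k : ℕ) : ℝ := hfun n A k - hfun n B k

def Dfin (n : ℕ) (A B : Finset (Fin n)) : Finset ℕ :=
  (Finset.range n).filter (fun k => ¬((k ∈ A.image Fin.val) ↔ (k ∈ B.image Fin.val)))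

def mfun (n : ℕ) (A B : Finset (Fin n)) (i : ℕ) : ℕ :=
  if h : ((Dfin n A B).filter (· ≤ i)).Nonempty then ((Dfin n A B).filter (· ≤ i)).max' h
  else if h2 : (Dfin n A B).Nonempty then (Dfin n A B).min' h2 else 0

lemma abs_hfun (A : Finset (Fin n)) (k : ℕ) : |hfun n A k| = 1 := by
  unfold hfun; split <;> simp

lemma mem_image_val (A : Finset (Fin n)) (j : Fin n) :
    j.val ∈ A.image Fin.val ↔ j ∈ A := by
  constructor
  · intro h
    obtain ⟨a, ha, hav⟩ := Finset.mem_image.mp h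
    rwa [← Fin.val_injective hav]
  · intro h; exact Finset.mem_image.mpr ⟨j, h, rfl⟩

lemma sum_pow4_le (N : ℕ) : ∑ k ∈ Finset.range N, (4:ℝ)^k ≤ 4^N / 3 := by
  induction N with
  | zero => simp
  | succ N ih =>
    rw [Finset.sum_range_succ]
    have : (4:ℝ)^(N+1) = 4 * 4^N := by ring
    rw [this]
    linarith
lemma sum_pow4inv_eq (N : ℕ) :
    ∑ k ∈ Finset.range N, ((4:ℝ)⁻¹)^k = (4/3) * (1 - ((4:ℝ)⁻¹)^N) := by
  induction N with
  | zero => simp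
  | succ N ih =>
    rw [Finset.sum_range_succ, ih]
    have : ((4:ℝ)⁻¹)^(N+1) = ((4:ℝ)⁻¹)^N * 4⁻¹ := by ring
    rw [this]; ring

lemma sum_pow4inv_le (N : ℕ) : ∑ k ∈ Finset.range N, ((4:ℝ)⁻¹)^k ≤ 4/3 := by
  rw [sum_pow4inv_eq]
  have : (0:ℝ) ≤ ((4:ℝ)⁻¹)^N := by positivity
  nlinarith

/-- generic bound : |∑_{k∈F} u k * r^k| ≤ c * ∑_{k∈F} r^k -/
lemma abs_sum_mul_pow_le (F : Finset ℕ) (u : ℕ → ℝ) (r c : ℝ) (hr : 0 ≤ r)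
    (hu : ∀ k ∈ F, |u k| ≤ c) :
    |∑ k ∈ F, u k * r^k| ≤ c * ∑ k ∈ F, r^k := by
  calc |∑ k ∈ F, u k * r^k| ≤ ∑ k ∈ F, |u k * r^k| := Finset.abs_sum_le_sum_abs _ _
  _ ≤ ∑ k ∈ F, c * r^k := by
      apply Finset.sum_le_sum
      intro k hk
      rw [abs_mul, abs_of_nonneg (by positivity : (0:ℝ) ≤ r^k)]
      exact mul_le_mul_of_nonneg_right (hu k hk) (by positivity)
  _ = c * ∑ k ∈ F, r^k := by rw [Finset.mul_sum]

lemma abs_efun_le (A B : Finset (Fin n)) (k : ℕ) : |efun n A B k| ≤ 2 := by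
  unfold efun
  calc |hfun n A k - hfun n B k| ≤ |hfun n A k| + |hfun n B k| := abs_sub _ _
  _ = 2 := by rw [abs_hfun, abs_hfun]; norm_num

lemma efun_eq_zero (A B : Finset (Fin n)) (k : ℕ)
    (h : (k ∈ A.image Fin.val) ↔ (k ∈ B.image Fin.val)) : efun n A B k = 0 := by
  unfold efun hfun
  by_cases hk : k ∈ A.image Fin.val
  · rw [if_pos hk, if_pos (h.mp hk)]; ring
  · rw [if_neg hk, if_neg (fun hb => hk (h.mpr hb))]; ring

lemma efun_of_mem (A B : Finset (Fin n)) (k : ℕ) (hk : k ∈ Dfin n A B) :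
    (k ∈ A.image Fin.val → efun n A B k = -2) ∧
    (k ∉ A.image Fin.val → efun n A B k = 2) := by
  unfold Dfin at hk
  rw [Finset.mem_filter] at hk
  obtain ⟨-, hd⟩ := hk
  constructor
  · intro hA
    have hB : k ∉ B.image Fin.val := fun hB => hd ⟨fun _ => hB, fun _ => hA⟩
    unfold efun hfun; rw [if_pos hA, if_neg hB]; ring
  · intro hA
    have hB : k ∈ B.image Fin.val := by
      by_contra hB
      exact hd ⟨fun h => absurd h hA, fun h => absurd h hB⟩
    unfold efun hfun; rw [if_neg hA, if_pos hB]; ring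

lemma efun_zero_of_notMem (A B : Finset (Fin n)) (k : ℕ) (hk : k < n)
    (h : k ∉ Dfin n A B) : efun n A B k = 0 := by
  apply efun_eq_zero
  unfold Dfin at h
  rw [Finset.mem_filter] at h
  push_neg at h
  by_contra h2
  exact h2 (h (Finset.mem_range.mpr hk))

lemma w_eq (A B : Finset (Fin n)) (j : ℕ) :
    vfun n A j - vfun n B j = efun n A B j + ((4:ℝ)^(n+2))⁻¹ *
      ((∑ k ∈ Finset.range (j+1), efun n A B k * 4^k)
        + (1/100) * ∑ k ∈ Finset.range n, efun n A B k * ((4:ℝ)⁻¹)^k) := by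
  unfold vfun efun
  have h1 : ∑ k ∈ Finset.range (j+1), (hfun n A k - hfun n B k) * 4^k
      = (∑ k ∈ Finset.range (j+1), hfun n A k * 4^k)
        - ∑ k ∈ Finset.range (j+1), hfun n B k * 4^k := by
    rw [← Finset.sum_sub_distrib]; congr 1; ext k; ring
  have h2 : ∑ k ∈ Finset.range n, (hfun n A k - hfun n B k) * ((4:ℝ)⁻¹)^k
      = (∑ k ∈ Finset.range n, hfun n A k * ((4:ℝ)⁻¹)^k)
        - ∑ k ∈ Finset.range n, hfun n B k * ((4:ℝ)⁻¹)^k := by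
    rw [← Finset.sum_sub_distrib]; congr 1; ext k; ring
  rw [h1, h2]; ring

lemma mfun_mem (A B : Finset (Fin n)) (hD : (Dfin n A B).Nonempty) (i : ℕ) :
    mfun n A B i ∈ Dfin n A B := by
  unfold mfun
  split
  · next h => exact Finset.mem_of_mem_filter _ (Finset.max'_mem _ h)
  · exact Finset.min'_mem _ hD

lemma mfun_eq_self (A B : Finset (Fin n)) (i : ℕ) (hi : i ∈ Dfin n A B) :
    mfun n A B i = i := by
  have hne : ((Dfin n A B).filter (· ≤ i)).Nonempty :=
    ⟨i, Finset.mem_filter.mpr ⟨hi, le_refl i⟩⟩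
  unfold mfun
  rw [dif_pos hne]
  apply le_antisymm
  · exact (Finset.mem_filter.mp (Finset.max'_mem _ hne)).2
  · exact Finset.le_max' ((Dfin n A B).filter (· ≤ i)) i (Finset.mem_filter.mpr ⟨hi, le_refl i⟩)

lemma mfun_succ_notMem (A B : Finset (Fin n)) (i : ℕ) (h : (i+1) ∉ Dfin n A B) :
    mfun n A B (i+1) = mfun n A B i := by
  have heq : (Dfin n A B).filter (· ≤ i+1) = (Dfin n A B).filter (· ≤ i) := by
    ext k
    simp only [Finset.mem_filter]
    constructor
    · rintro ⟨hk, hle⟩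
      refine ⟨hk, ?_⟩
      rcases Nat.lt_or_ge k (i+1) with h2 | h2
      · omega
      · exfalso; have : k = i + 1 := by omega
        rw [this] at hk; exact h hk
    · rintro ⟨hk, hle⟩; exact ⟨hk, by omega⟩
  unfold mfun
  rw [heq]

lemma mfun_le_of_filter_ne (A B : Finset (Fin n)) (i : ℕ)
    (h : ((Dfin n A B).filter (· ≤ i)).Nonempty) : mfun n A B i ≤ i := by
  unfold mfun
  rw [dif_pos h]
  exact (Finset.mem_filter.mp (Finset.max'_mem _ h)).2


lemma tail_bound (u : ℕ → ℝ) (hu : ∀ k, |u k| ≤ 2) (a b : ℕ) :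
    |∑ k ∈ Finset.Ico a b, u k * ((4:ℝ)⁻¹)^k| ≤ (8/3) * ((4:ℝ)⁻¹)^a := by
  rw [Finset.sum_Ico_eq_sum_range]
  have key : ∀ j ∈ Finset.range (b - a), |u (a + j) * ((4:ℝ)⁻¹)^(a+j)|
      ≤ 2 * ((4:ℝ)⁻¹)^a * ((4:ℝ)⁻¹)^j := by
    intro j _
    rw [abs_mul, pow_add, abs_of_nonneg (by positivity : (0:ℝ) ≤ ((4:ℝ)⁻¹)^a * ((4:ℝ)⁻¹)^j)]
    calc |u (a+j)| * (((4:ℝ)⁻¹)^a * ((4:ℝ)⁻¹)^j)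
        ≤ 2 * (((4:ℝ)⁻¹)^a * ((4:ℝ)⁻¹)^j) :=
          mul_le_mul_of_nonneg_right (hu _) (by positivity)
      _ = 2 * ((4:ℝ)⁻¹)^a * ((4:ℝ)⁻¹)^j := by ring
  calc |∑ j ∈ Finset.range (b - a), u (a + j) * ((4:ℝ)⁻¹)^(a+j)|
      ≤ ∑ j ∈ Finset.range (b - a), |u (a + j) * ((4:ℝ)⁻¹)^(a+j)| :=
        Finset.abs_sum_le_sum_abs _ _
    _ ≤ ∑ j ∈ Finset.range (b - a), 2 * ((4:ℝ)⁻¹)^a * ((4:ℝ)⁻¹)^j :=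
        Finset.sum_le_sum key
    _ = 2 * ((4:ℝ)⁻¹)^a * ∑ j ∈ Finset.range (b - a), ((4:ℝ)⁻¹)^j := by
        rw [Finset.mul_sum]
    _ ≤ 2 * ((4:ℝ)⁻¹)^a * (4/3) := by
        apply mul_le_mul_of_nonneg_left (sum_pow4inv_le _) (by positivity)
    _ = (8/3) * ((4:ℝ)⁻¹)^a := by ring

lemma sign_w (A B : Finset (Fin n)) (hD : (Dfin n A B).Nonempty) (i : ℕ) (hi : i < n) :
    (mfun n A B i ∈ A.image Fin.val → vfun n A i - vfun n B i < 0) ∧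
    (mfun n A B i ∉ A.image Fin.val → 0 < vfun n A i - vfun n B i) := by
  set e := efun n A B with he
  set S : ℝ := ∑ k ∈ Finset.range (i+1), e k * 4^k with hS
  set R : ℝ := ∑ k ∈ Finset.range n, e k * ((4:ℝ)⁻¹)^k with hR
  set δ : ℝ := ((4:ℝ)^(n+2))⁻¹ with hδ
  have hδpos : 0 < δ := by rw [hδ]; positivity
  have hw : vfun n A i - vfun n B i = e i + δ * (S + (1/100) * R) := w_eq A B i
  have hRabs : |R| ≤ 8/3 := by
    calc |R| ≤ 2 * ∑ k ∈ Finset.range n, ((4:ℝ)⁻¹)^k :=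
          abs_sum_mul_pow_le _ _ _ _ (by norm_num) (fun k _ => abs_efun_le A B k)
      _ ≤ 2 * (4/3) := by linarith [sum_pow4inv_le n]
      _ = 8/3 := by norm_num
  by_cases hiD : i ∈ Dfin n A B
  · -- difference point: main term dominates
    have hm : mfun n A B i = i := mfun_eq_self A B i hiD
    have hSabs : |S| ≤ 2 * (4^(i+1)/3) := by
      calc |S| ≤ 2 * ∑ k ∈ Finset.range (i+1), (4:ℝ)^k :=
            abs_sum_mul_pow_le _ _ _ _ (by norm_num) (fun k _ => abs_efun_le A B k)
        _ ≤ 2 * (4^(i+1)/3) := by linarith [sum_pow4_le (i+1)]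
    have h4 : (4:ℝ)^(i+1) ≤ 4^(n+2) := by
      apply pow_le_pow_right₀ (by norm_num) (by omega)
    have h4pos : (0:ℝ) < 4^(i+1) := by positivity
    have hδ4 : δ * (4:ℝ)^(i+1) ≤ 1 := by
      rw [hδ]
      rw [inv_mul_le_iff₀ (by positivity)]
      linarith
    have hpert : |δ * (S + (1/100) * R)| ≤ 1 := by
      have h1 : |S + (1/100) * R| ≤ (4:ℝ)^(i+1) := by
        have hfour : (4:ℝ) ≤ 4^(i+1) := by
          calc (4:ℝ) = 4^1 := by norm_num
          _ ≤ 4^(i+1) := pow_le_pow_right₀ (by norm_num) (by omega)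
        calc |S + (1/100) * R| ≤ |S| + (1/100) * |R| := by
              have := abs_add_le S ((1/100) * R)
              rw [abs_mul] at this
              simpa [abs_of_nonneg] using this
          _ ≤ 2 * (4^(i+1)/3) + (1/100) * (8/3) := by linarith
          _ ≤ (4:ℝ)^(i+1) := by nlinarith
      rw [abs_mul, abs_of_nonneg (le_of_lt hδpos)]
      calc δ * |S + (1/100) * R| ≤ δ * (4:ℝ)^(i+1) :=
            mul_le_mul_of_nonneg_left h1 (le_of_lt hδpos)
        _ ≤ 1 := hδ4
    obtain ⟨hp1, hp2⟩ := abs_le.mp hpert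
    obtain ⟨hmem, hnmem⟩ := efun_of_mem A B i hiD
    rw [← he] at hmem hnmem
    rw [hm]
    constructor
    · intro hA
      rw [hw, hmem hA]; linarith
    · intro hA
      rw [hw, hnmem hA]; linarith
  · -- agreement point
    have hei : e i = 0 := by rw [he]; exact efun_zero_of_notMem A B i hi hiD
    by_cases hF : ((Dfin n A B).filter (· ≤ i)).Nonempty
    · -- there is a difference point ≤ i
      set m := ((Dfin n A B).filter (· ≤ i)).max' hF with hmdef
      have hm : mfun n A B i = m := by unfold mfun; rw [dif_pos hF]
      have hmD : m ∈ Dfin n A B :=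
        Finset.mem_of_mem_filter _ (Finset.max'_mem _ hF)
      have hmle : m ≤ i := (Finset.mem_filter.mp (Finset.max'_mem _ hF)).2
      have hmax : ∀ k, m < k → k ≤ i → k ∉ Dfin n A B := by
        intro k hk1 hk2 hkD
        have : k ≤ m := Finset.le_max' ((Dfin n A B).filter (· ≤ i)) k
          (Finset.mem_filter.mpr ⟨hkD, hk2⟩)
        omega
      have hSsplit : S = e m * 4^m + ∑ k ∈ Finset.range m, e k * 4^k := by
        rw [hS]
        have h1 : Finset.range (i+1) = Finset.Ico 0 (i+1) := by
          rw [Finset.range_eq_Ico]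
        rw [h1, ← Finset.sum_Ico_consecutive _ (Nat.zero_le (m+1)) (by omega : m+1 ≤ i+1)]
        have h2 : ∑ k ∈ Finset.Ico (m+1) (i+1), e k * 4^k = 0 := by
          apply Finset.sum_eq_zero
          intro k hk
          rw [Finset.mem_Ico] at hk
          have : e k = 0 := by
            rw [he]; exact efun_zero_of_notMem A B k (by omega) (hmax k (by omega) (by omega))
          rw [this, zero_mul]
        rw [h2, add_zero, ← Finset.range_eq_Ico, Finset.sum_range_succ]
        ring
      have hrest : |∑ k ∈ Finset.range m, e k * 4^k| ≤ 2 * (4^m/3) := by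
        calc |∑ k ∈ Finset.range m, e k * 4^k| ≤ 2 * ∑ k ∈ Finset.range m, (4:ℝ)^k :=
              abs_sum_mul_pow_le _ _ _ _ (by norm_num) (fun k _ => abs_efun_le A B k)
          _ ≤ 2 * (4^m/3) := by linarith [sum_pow4_le m]
      obtain ⟨hr1, hr2⟩ := abs_le.mp hrest
      obtain ⟨hR1, hR2⟩ := abs_le.mp hRabs
      have h4m : (1:ℝ) ≤ 4^m := one_le_pow₀ (by norm_num : (1:ℝ) ≤ 4)
      obtain ⟨hmem, hnmem⟩ := efun_of_mem A B m hmD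
      rw [← he] at hmem hnmem
      rw [hm]
      constructor
      · intro hA
        have hSneg : S + (1/100) * R < 0 := by
          rw [hSsplit, hmem hA]; nlinarith
        rw [hw, hei, zero_add]
        exact mul_neg_of_pos_of_neg hδpos hSneg
      · intro hA
        have hSpos : 0 < S + (1/100) * R := by
          rw [hSsplit, hnmem hA]; nlinarith
        rw [hw, hei, zero_add]
        exact mul_pos hδpos hSpos
    · -- no difference point ≤ i : lookahead
      set m := (Dfin n A B).min' hD with hmdef
      have hm : mfun n A B i = m := by unfold mfun; rw [dif_neg hF, dif_pos hD]
      have hmD : m ∈ Dfin n A B := Finset.min'_mem _ hD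
      have hmin : ∀ k ∈ Dfin n A B, m ≤ k := fun k hk => Finset.min'_le _ k hk
      have hnotD : ∀ k, k ≤ i → k ∉ Dfin n A B := by
        intro k hk hkD
        exact hF ⟨k, Finset.mem_filter.mpr ⟨hkD, hk⟩⟩
      have hS0 : S = 0 := by
        rw [hS]
        apply Finset.sum_eq_zero
        intro k hk
        rw [Finset.mem_range] at hk
        have : e k = 0 := by
          rw [he]; exact efun_zero_of_notMem A B k (by omega) (hnotD k (by omega))
        rw [this, zero_mul]
      have hmn : m < n := by
        have := Finset.mem_filter.mp hmD
        exact Finset.mem_range.mp (Finset.mem_of_mem_filter _ hmD)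
      have hRsplit : R = e m * ((4:ℝ)⁻¹)^m + ∑ k ∈ Finset.Ico (m+1) n, e k * ((4:ℝ)⁻¹)^k := by
        rw [hR, Finset.range_eq_Ico,
          ← Finset.sum_Ico_consecutive _ (Nat.zero_le m) (le_of_lt hmn)]
        have h2 : ∑ k ∈ Finset.Ico 0 m, e k * ((4:ℝ)⁻¹)^k = 0 := by
          apply Finset.sum_eq_zero
          intro k hk
          rw [Finset.mem_Ico] at hk
          have hkD : k ∉ Dfin n A B := fun h => by
            have := hmin k h; omega
          have : e k = 0 := by
            rw [he]; exact efun_zero_of_notMem A B k (by omega) hkD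
          rw [this, zero_mul]
        rw [h2, zero_add, Finset.sum_eq_sum_Ico_succ_bot hmn]
      have htail := tail_bound e (fun k => abs_efun_le A B k) (m+1) n
      obtain ⟨ht1, ht2⟩ := abs_le.mp htail
      have hq : ((4:ℝ)⁻¹)^(m+1) = ((4:ℝ)⁻¹)^m * 4⁻¹ := by ring
      have hqpos : (0:ℝ) < ((4:ℝ)⁻¹)^m := by positivity
      obtain ⟨hmem, hnmem⟩ := efun_of_mem A B m hmD
      rw [← he] at hmem hnmem
      rw [hm]
      constructor
      · intro hA
        have hRneg : R < 0 := by
          rw [hRsplit, hmem hA]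
          rw [hq] at ht2
          nlinarith
        rw [hw, hei, hS0, zero_add, zero_add]
        apply mul_neg_of_pos_of_neg hδpos
        nlinarith
      · intro hA
        have hRpos : 0 < R := by
          rw [hRsplit, hnmem hA]
          rw [hq] at ht1
          nlinarith
        rw [hw, hei, hS0, zero_add, zero_add]
        apply mul_pos hδpos
        nlinarith

lemma alt_helper {a b P Q : Prop} (h1 : a ↔ ¬P) (h2 : a ↔ ¬b) (h3 : b ↔ ¬Q) : P ↔ ¬Q := by
  tauto

lemma par_helper {X Y Q0 a b : Prop} (h1 : X ↔ (a ↔ Q0)) (h2 : X ↔ ¬Y) (h3 : ¬(b ↔ a)) :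
    Y ↔ (b ↔ Q0) := by
  tauto

lemma changes_le (s : ℕ) (hs : 2 ≤ s) (A B : Finset (Fin n)) (hD : (Dfin n A B).Nonempty)
    (hfAB : ¬ ∃ f : Fin s → Fin n, StrictMono f ∧
        (∀ i, i.val % 2 = 0 → f i ∈ A \ B) ∧ (∀ i, i.val % 2 = 1 → f i ∈ B \ A))
    (hfBA : ¬ ∃ f : Fin s → Fin n, StrictMono f ∧
        (∀ i, i.val % 2 = 0 → f i ∈ B \ A) ∧ (∀ i, i.val % 2 = 1 → f i ∈ A \ B)) :
    ((Finset.range (n-1)).filter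
      (fun k => (vfun n A k - vfun n B k) * (vfun n A (k+1) - vfun n B (k+1)) < 0)).card
      ≤ s - 2 := by
  set C : Finset ℕ := (Finset.range (n-1)).filter
      (fun k => (vfun n A k - vfun n B k) * (vfun n A (k+1) - vfun n B (k+1)) < 0) with hCdef
  set w : ℕ → ℝ := fun k => vfun n A k - vfun n B k with hwdef
  by_contra hcon
  push_neg at hcon
  have hcard : s - 1 ≤ C.card := by omega
  -- basic sign facts
  have hwne : ∀ i, i < n → w i ≠ 0 := by
    intro i hi
    obtain ⟨h1, h2⟩ := sign_w A B hD i hi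
    have h1' : mfun n A B i ∈ A.image Fin.val → w i < 0 := h1
    have h2' : mfun n A B i ∉ A.image Fin.val → 0 < w i := h2
    by_cases hm : mfun n A B i ∈ A.image Fin.val
    · exact ne_of_lt (h1' hm)
    · exact (ne_of_lt (h2' hm)).symm
  have hP : ∀ i, i < n → (0 < w i ↔ mfun n A B i ∉ A.image Fin.val) := by
    intro i hi
    obtain ⟨h1, h2⟩ := sign_w A B hD i hi
    have h1' : mfun n A B i ∈ A.image Fin.val → w i < 0 := h1
    have h2' : mfun n A B i ∉ A.image Fin.val → 0 < w i := h2
    constructor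
    · intro hpos hm
      exact absurd (h1' hm) (by linarith)
    · exact h2'
  have hCmem : ∀ j ∈ C, j + 1 < n ∧ w j * w (j+1) < 0 := by
    intro j hj
    rw [hCdef, Finset.mem_filter, Finset.mem_range] at hj
    exact ⟨by omega, hj.2⟩  -- defeq
  have hopp : ∀ j, j + 1 < n → w j * w (j+1) < 0 → (0 < w j ↔ ¬ 0 < w (j+1)) := by
    intro j hj hlt
    rcases (hwne j (by omega)).lt_or_gt with h1 | h1 <;>
      rcases (hwne (j+1) hj).lt_or_gt with h2 | h2
    · exact absurd hlt (by nlinarith)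
    · constructor
      · intro h; linarith
      · intro h; exact absurd h2 (by tauto)
    · constructor
      · intro _ h; linarith
      · intro _; exact h1
    · exact absurd hlt (by nlinarith)
  have hchange : ∀ j, j + 1 < n → w j * w (j+1) < 0 → (j+1) ∈ Dfin n A B := by
    intro j hj hlt
    by_contra hnd
    have hmeq := mfun_succ_notMem A B j hnd
    have e1 := hP j (by omega)
    have e2 := hP (j+1) hj
    rw [hmeq] at e2
    have := hopp j hj hlt
    tauto
  have hmle_change : ∀ j, j + 1 < n → w j * w (j+1) < 0 → mfun n A B j ≤ j := by
    intro j hj hlt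
    by_cases hF : ((Dfin n A B).filter (· ≤ j)).Nonempty
    · exact mfun_le_of_filter_ne A B j hF
    · exfalso
      have hj1D := hchange j hj hlt
      have hmj1 : mfun n A B (j+1) = j + 1 := mfun_eq_self A B (j+1) hj1D
      have hmj : mfun n A B j = (Dfin n A B).min' hD := by
        unfold mfun; rw [dif_neg hF, dif_pos hD]
      have hminle : (Dfin n A B).min' hD ≤ j + 1 := Finset.min'_le _ _ hj1D
      have hmingt : j < (Dfin n A B).min' hD := by
        by_contra hle
        push_neg at hle
        exact hF ⟨_, Finset.mem_filter.mpr ⟨Finset.min'_mem _ hD, hle⟩⟩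
      have hmeq : mfun n A B j = mfun n A B (j+1) := by omega
      have e1 := hP j (by omega)
      have e2 := hP (j+1) hj
      rw [← hmeq] at e2
      have := hopp j hj hlt
      tauto
  -- sign constancy on change-free stretches
  have hsame : ∀ d a, a + d < n → (∀ j, a ≤ j → j < a + d → j ∉ C) →
      (0 < w a ↔ 0 < w (a + d)) := by
    intro d
    induction d with
    | zero => intro a _ _; rfl
    | succ d ih =>
      intro a h hnc
      have h1 := ih a (by omega) (fun j hj1 hj2 => hnc j hj1 (by omega))
      have hnc2 : (a+d) ∉ C := hnc (a+d) (by omega) (by omega)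
      have hnlt : ¬ (w (a+d) * w (a+d+1) < 0) := by
        intro hlt
        exact hnc2 (by rw [hCdef, Finset.mem_filter, Finset.mem_range]; exact ⟨by omega, hlt⟩)
      have hne1 := hwne (a+d) (by omega)
      have hne2 := hwne (a+d+1) (by omega)
      have h2 : (0 < w (a+d) ↔ 0 < w (a+d+1)) := by
        rcases hne1.lt_or_gt with hx | hx <;> rcases hne2.lt_or_gt with hy | hy
        · constructor <;> (intro h; linarith)
        · exact absurd (mul_neg_of_neg_of_pos hx hy) hnlt
        · exact absurd (mul_neg_of_pos_of_neg hx hy) hnlt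
        · constructor <;> (intro _; assumption)
      have : a + (d+1) = (a + d) + 1 := rfl
      rw [this, ← h2]
      exact h1
  -- enumerate first s-1 change points
  have hs2card : s - 2 < C.card := hcon
  set o := C.orderIsoOfFin rfl with hodef
  set I : ℕ → ℕ := fun k => (o ⟨min k (s-2), by omega⟩ : ℕ) with hIdef
  have hImem : ∀ k, I k ∈ C := by
    intro k
    exact (o ⟨min k (s-2), by omega⟩).2
  have hImono : ∀ k l, k < l → l ≤ s-2 → I k < I l := by
    intro k l hkl hl
    have : (⟨min k (s-2), by omega⟩ : Fin C.card) < ⟨min l (s-2), by omega⟩ := by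
      rw [Fin.lt_def]; simp only; omega
    exact o.strictMono this
  have hIbetween : ∀ k j, k + 1 ≤ s - 2 → I k < j → j < I (k+1) → j ∉ C := by
    intro k j hk hj1 hj2 hjC
    set l := o.symm ⟨j, hjC⟩ with hldef
    have hl : (o l : ℕ) = j := by rw [hldef, OrderIso.apply_symm_apply]
    have h1 : (⟨min k (s-2), by omega⟩ : Fin C.card) < l := by
      rw [← o.lt_iff_lt]
      rw [← Subtype.coe_lt_coe, hl]
      exact hj1
    have h2 : l < (⟨min (k+1) (s-2), by omega⟩ : Fin C.card) := by
      rw [← o.lt_iff_lt]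
      rw [← Subtype.coe_lt_coe, hl]
      exact hj2
    rw [Fin.lt_def] at h1 h2
    simp only at h1 h2
    omega
  -- the alternating sequence
  set p : ℕ → ℕ := fun k => if k = 0 then mfun n A B (I 0) else I (k-1) + 1 with hpdef
  have hp0 : p 0 = mfun n A B (I 0) := by simp [hpdef]
  have hpk : ∀ k, p (k+1) = I k + 1 := by intro k; simp [hpdef]
  have hCfact : ∀ k, I k + 1 < n ∧ w (I k) * w (I k + 1) < 0 := fun k => hCmem _ (hImem k)
  have hpD : ∀ k, k ≤ s - 1 → p k ∈ Dfin n A B := by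
    intro k hk
    match k with
    | 0 => rw [hp0]; exact mfun_mem A B hD _
    | (k'+1) =>
      rw [hpk]
      exact hchange _ (hCfact k').1 (hCfact k').2
  have hpn : ∀ k, k ≤ s - 1 → p k < n := by
    intro k hk
    have := hpD k hk
    unfold Dfin at this
    exact Finset.mem_range.mp (Finset.mem_of_mem_filter _ this)
  have hstep : ∀ k, k + 1 ≤ s - 1 → p k < p (k+1) := by
    intro k hk
    match k with
    | 0 =>
      rw [hp0, hpk]
      have := hmle_change (I 0) (hCfact 0).1 (hCfact 0).2
      omega
    | (k'+1) =>
      rw [hpk, hpk]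
      have : I k' < I (k'+1) := hImono k' (k'+1) (by omega) (by omega)
      omega
  have hmono' : ∀ d k, k + d + 1 ≤ s - 1 → p k < p (k + d + 1) := by
    intro d
    induction d with
    | zero => intro k hk; exact hstep k hk
    | succ d ih =>
      intro k hk
      have h1 := ih k (by omega)
      have h2 := hstep (k + d + 1) (by omega)
      have : k + (d+1) + 1 = (k + d + 1) + 1 := by omega
      rw [this]
      omega
  -- alternation
  have hQ : ∀ k, k + 1 ≤ s - 1 →
      ((p k ∈ A.image Fin.val) ↔ ¬ (p (k+1) ∈ A.image Fin.val)) := by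
    intro k hk
    by_cases h0 : k = 0
    · subst h0
      have hi0 := hCfact 0
      have e0 : (0 < w (I 0) ↔ mfun n A B (I 0) ∉ A.image Fin.val) := hP (I 0) (by omega)
      have echg := hopp (I 0) hi0.1 hi0.2
      have e1 : (0 < w (I 0 + 1) ↔ (I 0 + 1) ∉ A.image Fin.val) := by
        have := hP (I 0 + 1) hi0.1
        rw [mfun_eq_self A B (I 0 + 1) (hchange _ hi0.1 hi0.2)] at this
        exact this
      rw [hp0, hpk]
      exact alt_helper e0 echg e1
    · obtain ⟨k', rfl⟩ : ∃ k', k = k' + 1 := ⟨k - 1, by omega⟩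
      have hik := hCfact k'
      have hik1 := hCfact (k'+1)
      have hmono0 : I k' < I (k'+1) := hImono k' (k'+1) (by omega) (by omega)
      -- sign at I k' + 1 equals sign at I (k'+1)
      have hconst : (0 < w (I k' + 1) ↔ 0 < w (I (k'+1))) := by
        have hd : I k' + 1 + (I (k'+1) - (I k' + 1)) = I (k'+1) := by omega
        have := hsame (I (k'+1) - (I k' + 1)) (I k' + 1) (by omega)
          (fun j hj1 hj2 => hIbetween k' j (by omega) (by omega) (by omega))
        rw [hd] at this
        exact this
      have e1 : (0 < w (I k' + 1) ↔ (I k' + 1) ∉ A.image Fin.val) := by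
        have := hP (I k' + 1) hik.1
        rw [mfun_eq_self A B (I k' + 1) (hchange _ hik.1 hik.2)] at this
        exact this
      have e2 : (0 < w (I (k'+1) + 1) ↔ (I (k'+1) + 1) ∉ A.image Fin.val) := by
        have := hP (I (k'+1) + 1) hik1.1
        rw [mfun_eq_self A B (I (k'+1) + 1) (hchange _ hik1.1 hik1.2)] at this
        exact this
      have echg := hopp (I (k'+1)) hik1.1 hik1.2
      rw [hpk, hpk]
      exact alt_helper e1 (hconst.trans echg) e2
  -- parity
  have hpar : ∀ k, k ≤ s - 1 →
      ((p k ∈ A.image Fin.val) ↔ (k % 2 = 0 ↔ p 0 ∈ A.image Fin.val)) := by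
    intro k
    induction k with
    | zero => intro _; simp
    | succ k ih =>
      intro hk
      have h1 := ih (by omega)
      have h2 := hQ k (by omega)
      have h3 : ¬((k+1) % 2 = 0 ↔ k % 2 = 0) := by omega
      exact par_helper h1 h2 h3
  -- build the forbidden configuration
  have hslt : ∀ j : Fin s, (j : ℕ) ≤ s - 1 := fun j => by omega
  set f : Fin s → Fin n := fun j => ⟨p j, hpn j (hslt j)⟩ with hfdef
  have hfmono : StrictMono f := by
    intro a b hab
    rw [hfdef]
    simp only [Fin.mk_lt_mk]
    have hab' : (a:ℕ) < (b:ℕ) := hab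
    have : (b:ℕ) = (a:ℕ) + ((b:ℕ) - (a:ℕ) - 1) + 1 := by omega
    rw [this]
    exact hmono' _ _ (by have := hslt b; omega)
  have hdiffp : ∀ j : Fin s, ¬((p j ∈ A.image Fin.val) ↔ (p j ∈ B.image Fin.val)) := by
    intro j
    have := hpD j (hslt j)
    unfold Dfin at this
    exact (Finset.mem_filter.mp this).2
  have hvalf : ∀ j : Fin s, (f j).val = p j := fun j => rfl
  by_cases hq0 : p 0 ∈ A.image Fin.val
  · apply hfAB
    refine ⟨f, hfmono, ?_, ?_⟩
    · intro j hj
      have hA : p j ∈ A.image Fin.val :=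
        (hpar j (hslt j)).mpr (iff_of_true hj hq0)
      have hB : p j ∉ B.image Fin.val := by
        intro hb; exact hdiffp j ⟨fun _ => hb, fun _ => hA⟩
      rw [Finset.mem_sdiff]
      exact ⟨(mem_image_val A (f j)).mp hA, fun hbm => hB ((mem_image_val B (f j)).mpr hbm)⟩
    · intro j hj
      have hA : p j ∉ A.image Fin.val := by
        intro h
        have h2 := ((hpar j (hslt j)).mp h).mpr hq0
        omega
      have hB : p j ∈ B.image Fin.val := by
        by_contra hb
        exact hdiffp j ⟨fun ha => absurd ha hA, fun hb' => absurd hb' hb⟩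
      rw [Finset.mem_sdiff]
      exact ⟨(mem_image_val B (f j)).mp hB, fun ham => hA ((mem_image_val A (f j)).mpr ham)⟩
  · apply hfBA
    refine ⟨f, hfmono, ?_, ?_⟩
    · intro j hj
      have hA : p j ∉ A.image Fin.val := by
        intro h
        exact hq0 (((hpar j (hslt j)).mp h).mp hj)
      have hB : p j ∈ B.image Fin.val := by
        by_contra hb
        exact hdiffp j ⟨fun ha => absurd ha hA, fun hb' => absurd hb' hb⟩
      rw [Finset.mem_sdiff]
      exact ⟨(mem_image_val B (f j)).mp hB, fun ham => hA ((mem_image_val A (f j)).mpr ham)⟩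
    · intro j hj
      have hA : p j ∈ A.image Fin.val :=
        (hpar j (hslt j)).mpr (iff_of_false (by omega) hq0)
      have hB : p j ∉ B.image Fin.val := by
        intro hb; exact hdiffp j ⟨fun _ => hb, fun _ => hA⟩
      rw [Finset.mem_sdiff]
      exact ⟨(mem_image_val A (f j)).mp hA, fun hbm => hB ((mem_image_val B (f j)).mpr hbm)⟩

lemma interp_sub (n : ℕ) (v u : ℕ → ℝ) (x : ℝ) :
    interp n (fun k => v k - u k) x = interp n v x - interp n u x := by
  unfold interp
  rw [← Finset.sum_sub_distrib]
  congr 1; ext i; ring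

lemma vfun_pert (A : Finset (Fin n)) (j : ℕ) (hj : j < n) :
    |vfun n A j - hfun n A j| ≤ 1/2 := by
  set S1 : ℝ := ∑ k ∈ Finset.range (j+1), hfun n A k * 4^k with hS1
  set S2 : ℝ := ∑ k ∈ Finset.range n, hfun n A k * ((4:ℝ)⁻¹)^k with hS2
  have hd : vfun n A j - hfun n A j = ((4:ℝ)^(n+2))⁻¹ * (S1 + (1/100) * S2) := by
    unfold vfun; ring
  have h1 : |S1| ≤ 4^n/3 := by
    calc |S1| ≤ 1 * ∑ k ∈ Finset.range (j+1), (4:ℝ)^k :=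
          abs_sum_mul_pow_le _ _ _ _ (by norm_num) (fun k _ => le_of_eq (abs_hfun A k))
      _ ≤ 1 * (4^(j+1)/3) := by linarith [sum_pow4_le (j+1)]
      _ ≤ 4^n/3 := by
          have : (4:ℝ)^(j+1) ≤ 4^n := pow_le_pow_right₀ (by norm_num) (by omega)
          linarith
  have h2 : |S2| ≤ 4/3 := by
    calc |S2| ≤ 1 * ∑ k ∈ Finset.range n, ((4:ℝ)⁻¹)^k :=
          abs_sum_mul_pow_le _ _ _ _ (by norm_num) (fun k _ => le_of_eq (abs_hfun A k))
      _ ≤ 4/3 := by linarith [sum_pow4inv_le n]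
  have h4n : (1:ℝ) ≤ 4^n := one_le_pow₀ (by norm_num : (1:ℝ) ≤ 4)
  have habs : |S1 + (1/100) * S2| ≤ 4^n := by
    obtain ⟨a1, a2⟩ := abs_le.mp h1
    obtain ⟨b1, b2⟩ := abs_le.mp h2
    rw [abs_le]
    constructor <;> nlinarith
  have hδ4 : ((4:ℝ)^(n+2))⁻¹ * 4^n = 1/16 := by
    rw [pow_add]
    have h0 : (4:ℝ)^n ≠ 0 := by positivity
    field_simp
    ring
  rw [hd, abs_mul, abs_of_nonneg (by positivity : (0:ℝ) ≤ ((4:ℝ)^(n+2))⁻¹)]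
  calc ((4:ℝ)^(n+2))⁻¹ * |S1 + (1/100) * S2| ≤ ((4:ℝ)^(n+2))⁻¹ * 4^n :=
        mul_le_mul_of_nonneg_left habs (by positivity)
    _ = 1/16 := hδ4
    _ ≤ 1/2 := by norm_num

lemma vfun_sign (A : Finset (Fin n)) (j : ℕ) (hj : j < n) :
    (j ∈ A.image Fin.val → vfun n A j < 0) ∧ (j ∉ A.image Fin.val → 0 < vfun n A j) := by
  obtain ⟨h1, h2⟩ := abs_le.mp (vfun_pert A j hj)
  constructor
  · intro hm
    have : hfun n A j = -1 := by unfold hfun; rw [if_pos hm]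
    rw [this] at h1 h2; linarith
  · intro hm
    have : hfun n A j = 1 := by unfold hfun; rw [if_neg hm]
    rw [this] at h1 h2; linarith

lemma Dfin_nonempty (A B : Finset (Fin n)) (hAB : A ≠ B) :
    (Dfin n A B).Nonempty ∧ 0 < n := by
  have : ∃ i : Fin n, ¬(i ∈ A ↔ i ∈ B) := by
    by_contra h
    push_neg at h
    apply hAB
    ext i
    have := h i
    tauto
  obtain ⟨i, hi⟩ := this
  refine ⟨⟨i.val, ?_⟩, i.pos⟩
  rw [Dfin, Finset.mem_filter]
  refine ⟨Finset.mem_range.mpr i.isLt, ?_⟩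
  rw [mem_image_val A i, mem_image_val B i]
  exact hi

end Stmt8

open Stmt8

/-- Every finite `(AB)^t`-free hypergraph (here `s = 2t` is an integer, `t ≥ 1` half an
integer) on the ordered vertex set `Fin n` can be realized by a finite point set on a
horizontal line (points `(pts i, 0)` with `pts` strictly increasing) and a family of
`x`-monotone bi-infinite curves (graphs of continuous functions `ℝ → ℝ`) such that each
hyperedge equals the set of points lying on or above its curve, and any two curves of
distinct hyperedges intersect in at most `2t - 2 = s - 2` points. -/
theorem stmt8 (s n : ℕ) (hs : 2 ≤ s) (E : Set (Finset (Fin n)))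
    (hfree : ∀ A ∈ E, ∀ B ∈ E,
      ¬ ∃ f : Fin s → Fin n, StrictMono f ∧
        (∀ i, i.val % 2 = 0 → f i ∈ A \ B) ∧
        (∀ i, i.val % 2 = 1 → f i ∈ B \ A)) :
    ∃ (pts : Fin n → ℝ) (curve : Finset (Fin n) → ℝ → ℝ),
      StrictMono pts ∧
      (∀ A ∈ E, Continuous (curve A)) ∧
      (∀ A ∈ E, ∀ i : Fin n, i ∈ A ↔ curve A (pts i) ≤ 0) ∧
      (∀ A ∈ E, ∀ B ∈ E, A ≠ B →
        {x : ℝ | curve A x = curve B x}.Finite ∧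
        {x : ℝ | curve A x = curve B x}.ncard ≤ s - 2) := by
  refine ⟨fun i => (i.val : ℝ), fun A => interp n (vfun n A), ?_, ?_, ?_, ?_⟩
  · intro a b hab
    show ((a.val : ℕ) : ℝ) < ((b.val : ℕ) : ℝ)
    have : (a.val : ℕ) < b.val := hab
    exact_mod_cast this
  · intro A _
    exact interp_continuous n _
  · intro A _ i
    show i ∈ A ↔ interp n (vfun n A) ((i.val : ℕ) : ℝ) ≤ 0
    rw [interp_eval_int n _ i.val i.isLt]
    obtain ⟨h1, h2⟩ := vfun_sign A i.val i.isLt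
    constructor
    · intro hmem
      exact le_of_lt (h1 ((mem_image_val A i).mpr hmem))
    · intro hle
      by_contra hmem
      have := h2 (fun hc => hmem ((mem_image_val A i).mp hc))
      linarith
  · intro A hA B hB hAB
    obtain ⟨hD, hn⟩ := Dfin_nonempty A B hAB
    have hwne : ∀ k, k < n → vfun n A k - vfun n B k ≠ 0 := by
      intro k hk
      obtain ⟨h1, h2⟩ := sign_w A B hD k hk
      by_cases hm : mfun n A B k ∈ A.image Fin.val
      · exact ne_of_lt (h1 hm)
      · exact (ne_of_lt (h2 hm)).symm
    have hzc := interp_zero_count n hn (fun k => vfun n A k - vfun n B k)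
      (fun k hk => hwne k hk)
    have hcl := changes_le s hs A B hD (hfree A hA B hB) (hfree B hB A hA)
    have hsetEq : {x : ℝ | interp n (vfun n A) x = interp n (vfun n B) x}
        = {x : ℝ | interp n (fun k => vfun n A k - vfun n B k) x = 0} := by
      ext x
      simp only [Set.mem_setOf_eq]
      rw [interp_sub n (vfun n A) (vfun n B) x]
      constructor <;> intro h <;> linarith
    show ({x : ℝ | interp n (vfun n A) x = interp n (vfun n B) x}).Finite ∧
      ({x : ℝ | interp n (vfun n A) x = interp n (vfun n B) x}).ncard ≤ s - 2
    rw [hsetEq]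
    exact ⟨hzc.1, le_trans hzc.2 hcl⟩
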